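/- Let q ≥ 2 be a natural number, let x ∈ Sym(ℤ) be the translation i ↦ i + 1, and let y ∈ Sym(ℤ) be the q-cycle (1, 2, …, q), i.e. the permutation with y(i) = i + 1 for 1 ≤ i ≤ q − 1, y(q) = 1, and y(i) = i for all other i. Then every finite group A is isomorphic to a subgroup of the subgroup of Sym(ℤ) generated by {x, y}; that is, there is an injective group homomorphism from A into the subgroup generated by x and y. -/

import Mathlib

open Equiv



lemma conj_pair_key (g : Equiv.Perm ℤ) (a b c d : ℤ) :
    g * (Equiv.swap a b * Equiv.swap c d) * g⁻¹
      = Equiv.swap (g a) (g b) * Equiv.swap (g c) (g d) := by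
  rw [Equiv.swap_apply_apply g a b, Equiv.swap_apply_apply g c d]; group

lemma conj_mem {H : Subgroup (Equiv.Perm ℤ)} {g : Equiv.Perm ℤ} (hg : g ∈ H)
    {a b c d : ℤ} (h : Equiv.swap a b * Equiv.swap c d ∈ H) :
    Equiv.swap (g a) (g b) * Equiv.swap (g c) (g d) ∈ H := by
  rw [← conj_pair_key]
  exact H.mul_mem (H.mul_mem hg h) (H.inv_mem hg)

/-- from (m, m+d, m+d+1)-cycles to (m, m+1, m+d)-cycles, for d ≥ 2 -/
lemma auxC {H : Subgroup (Equiv.Perm ℤ)} (d : ℤ) (hd : 2 ≤ d)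
    (hT : ∀ m : ℤ, Equiv.swap m (m + d + 1) * Equiv.swap m (m + d) ∈ H) :
    ∀ m : ℤ, Equiv.swap m (m + d) * Equiv.swap m (m + 1) ∈ H := by
  intro m
  have hσ : (Equiv.swap (m+1) (m+1+d+1) * Equiv.swap (m+1) (m+1+d))⁻¹ ∈ H :=
    H.inv_mem (hT (m+1))
  have h1 := conj_mem hσ (hT m)
  have e0 : (Equiv.swap (m+1) (m+1+d+1) * Equiv.swap (m+1) (m+1+d))⁻¹ m = m := by
    simp only [mul_inv_rev, Equiv.swap_inv, Equiv.Perm.mul_apply, Equiv.swap_apply_def]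
    split_ifs <;> omega
  have e1 : (Equiv.swap (m+1) (m+1+d+1) * Equiv.swap (m+1) (m+1+d))⁻¹ (m + d + 1) = m + 1 := by
    simp only [mul_inv_rev, Equiv.swap_inv, Equiv.Perm.mul_apply, Equiv.swap_apply_def]
    split_ifs <;> omega
  have e2 : (Equiv.swap (m+1) (m+1+d+1) * Equiv.swap (m+1) (m+1+d))⁻¹ (m + d) = m + d := by
    simp only [mul_inv_rev, Equiv.swap_inv, Equiv.Perm.mul_apply, Equiv.swap_apply_def]
    split_ifs <;> omega
  rw [e0, e1, e2] at h1
  have h2 := H.inv_mem h1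
  rwa [mul_inv_rev, Equiv.swap_inv, Equiv.swap_inv] at h2

/-- descent: from (m, m+1, m+d)-cycles to (m, m+1, m+d-1)-cycles, for d ≥ 3 -/
lemma auxD {H : Subgroup (Equiv.Perm ℤ)} (d : ℤ) (hd : 3 ≤ d)
    (hC : ∀ m : ℤ, Equiv.swap m (m + d) * Equiv.swap m (m + 1) ∈ H) :
    ∀ m : ℤ, Equiv.swap m (m + (d-1)) * Equiv.swap m (m + 1) ∈ H := by
  intro m
  have hσ : (Equiv.swap (m+d-1) (m+d-1+d) * Equiv.swap (m+d-1) (m+d-1+1))⁻¹ ∈ H :=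
    H.inv_mem (hC (m+d-1))
  have h1 := conj_mem hσ (hC m)
  have e0 : (Equiv.swap (m+d-1) (m+d-1+d) * Equiv.swap (m+d-1) (m+d-1+1))⁻¹ m = m := by
    simp only [mul_inv_rev, Equiv.swap_inv, Equiv.Perm.mul_apply, Equiv.swap_apply_def]
    split_ifs <;> omega
  have e1 : (Equiv.swap (m+d-1) (m+d-1+d) * Equiv.swap (m+d-1) (m+d-1+1))⁻¹ (m + d)
      = m + (d-1) := by
    simp only [mul_inv_rev, Equiv.swap_inv, Equiv.Perm.mul_apply, Equiv.swap_apply_def]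
    split_ifs <;> omega
  have e2 : (Equiv.swap (m+d-1) (m+d-1+d) * Equiv.swap (m+d-1) (m+d-1+1))⁻¹ (m + 1)
      = m + 1 := by
    simp only [mul_inv_rev, Equiv.swap_inv, Equiv.Perm.mul_apply, Equiv.swap_apply_def]
    split_ifs <;> omega
  rwa [e0, e1, e2] at h1

lemma auxE {H : Subgroup (Equiv.Perm ℤ)} :
    ∀ n : ℕ, ∀ d : ℤ, d = 2 + n →
    (∀ m : ℤ, Equiv.swap m (m + d) * Equiv.swap m (m + 1) ∈ H) →
    ∀ m : ℤ, Equiv.swap m (m + 2) * Equiv.swap m (m + 1) ∈ H := by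
  intro n
  induction n with
  | zero =>
    intro d hd hC m
    have := hC m
    rwa [show d = 2 by omega] at this
  | succ k ih =>
    intro d hd hC
    exact ih (d-1) (by omega) (auxD d (by omega) hC)


/-- pairs of adjacent transpositions -/
lemma auxP {H : Subgroup (Equiv.Perm ℤ)}
    (hAdj : ∀ m : ℤ, Equiv.swap m (m + 2) * Equiv.swap m (m + 1) ∈ H) :
    ∀ k l : ℤ, Equiv.swap k (k + 1) * Equiv.swap l (l + 1) ∈ H := by
  have hS : ∀ m : ℤ, Equiv.swap m (m + 1) * Equiv.swap (m + 1) (m + 2) ∈ H := by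
    intro m
    have heq : Equiv.swap m (m+1) * Equiv.swap (m+1) (m+2)
        = Equiv.swap m (m + 2) * Equiv.swap m (m + 1) := by
      ext i
      simp only [Equiv.Perm.mul_apply, Equiv.swap_apply_def]
      split_ifs <;> omega
    rw [heq]; exact hAdj m
  have key : ∀ n : ℕ, ∀ k : ℤ, Equiv.swap k (k + 1) * Equiv.swap (k + n) (k + n + 1) ∈ H := by
    intro n
    induction n with
    | zero =>
      intro k
      have : Equiv.swap k (k + 1) * Equiv.swap (k + (0:ℕ)) (k + (0:ℕ) + 1) = 1 := by
        rw [show k + ((0:ℕ):ℤ) = k by simp]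
        exact Equiv.swap_mul_self _ _
      rw [this]; exact H.one_mem
    | succ j ih =>
      intro k
      have h3 := H.mul_mem (ih k) (hS (k + j))
      have heq : (Equiv.swap k (k+1) * Equiv.swap (k + (j:ℕ)) (k + (j:ℕ) + 1)) *
          (Equiv.swap (k + (j:ℤ)) (k + (j:ℤ) + 1) * Equiv.swap (k + (j:ℤ) + 1) (k + (j:ℤ) + 2))
          = Equiv.swap k (k+1) * Equiv.swap (k + ((j:ℕ)+1:ℕ)) (k + ((j:ℕ)+1:ℕ) + 1) := by
        push_cast
        rw [mul_assoc, ← mul_assoc (Equiv.swap (k + (j:ℤ)) (k + (j:ℤ) + 1)),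
          Equiv.swap_mul_self, one_mul]
        congr 1 <;> ring_nf
      rw [heq] at h3
      exact h3
  intro k l
  rcases le_total k l with h | h
  · have := key (l - k).toNat k
    rwa [show k + ((l - k).toNat : ℤ) = l by omega] at this
  · have := key (k - l).toNat l
    rw [show l + ((k - l).toNat : ℤ) = k by omega] at this
    have h2 := H.inv_mem this
    rwa [mul_inv_rev, Equiv.swap_inv, Equiv.swap_inv] at h2

/-- swap times fixed adjacent swap -/
lemma auxS {H : Subgroup (Equiv.Perm ℤ)}
    (hP : ∀ k l : ℤ, Equiv.swap k (k + 1) * Equiv.swap l (l + 1) ∈ H) :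
    ∀ a b : ℤ, a ≠ b → Equiv.swap a b * Equiv.swap 0 1 ∈ H := by
  have hP' : ∀ k : ℤ, Equiv.swap k (k + 1) * Equiv.swap 0 1 ∈ H := by
    intro k
    have := hP k 0
    rwa [show (0:ℤ) + 1 = 1 by norm_num] at this
  have main : ∀ n : ℕ, ∀ a : ℤ, Equiv.swap a (a + n + 1) * Equiv.swap 0 1 ∈ H := by
    intro n
    induction n with
    | zero =>
      intro a
      simpa using hP' a
    | succ j ih =>
      intro a
      have h0 : Equiv.swap (a + j + 1) (a + j + 2) a = a := by
        simp only [Equiv.swap_apply_def]; split_ifs <;> omega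
      have h1 : Equiv.swap (a + j + 1) (a + j + 2) (a + (j:ℤ) + 1) = a + j + 2 := by
        simp only [Equiv.swap_apply_def]; split_ifs <;> omega
      have hc : Equiv.swap a (a + (j:ℤ) + 2)
          = Equiv.swap (a + j + 1) (a + j + 2) * Equiv.swap a (a + (j:ℤ) + 1) *
            (Equiv.swap (a + j + 1) (a + j + 2))⁻¹ := by
        have h := Equiv.swap_apply_apply (Equiv.swap (a + (j:ℤ) + 1) (a + (j:ℤ) + 2)) a
          (a + (j:ℤ) + 1)
        rw [h0, h1] at h
        exact h
      have hB : Equiv.swap (a + (j:ℤ) + 1) (a + (j:ℤ) + 2) * Equiv.swap 0 1 ∈ H := by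
        have := hP' (a + j + 1)
        rwa [show a + (j:ℤ) + 1 + 1 = a + j + 2 by ring] at this
      have hsp : Equiv.swap a (a + (j:ℤ) + 1) * Equiv.swap (a + (j:ℤ) + 1) (a + (j:ℤ) + 2) ∈ H := by
        have h2 : Equiv.swap 0 1 * Equiv.swap (a + (j:ℤ) + 1) (a + (j:ℤ) + 2) ∈ H := by
          have := H.inv_mem hB
          rwa [mul_inv_rev, Equiv.swap_inv, Equiv.swap_inv] at this
        have h4 := H.mul_mem (ih a) h2
        rwa [mul_assoc, ← mul_assoc (Equiv.swap 0 1), Equiv.swap_mul_self, one_mul] at h4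
      have hps : Equiv.swap (a + (j:ℤ) + 1) (a + (j:ℤ) + 2) * Equiv.swap a (a + (j:ℤ) + 1) ∈ H := by
        have := H.inv_mem hsp
        rwa [mul_inv_rev, Equiv.swap_inv, Equiv.swap_inv] at this
      have hfin := H.mul_mem hps hB
      have heq : (Equiv.swap (a + (j:ℤ) + 1) (a + (j:ℤ) + 2) * Equiv.swap a (a + (j:ℤ) + 1)) *
          (Equiv.swap (a + (j:ℤ) + 1) (a + (j:ℤ) + 2) * Equiv.swap 0 1)
          = Equiv.swap a (a + ((j:ℕ)+1:ℕ) + 1) * Equiv.swap 0 1 := by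
        rw [show a + (((j:ℕ)+1:ℕ) : ℤ) + 1 = a + (j:ℤ) + 2 by push_cast; ring, hc,
          Equiv.swap_inv]
        group
      rw [heq] at hfin
      exact hfin
  intro a b hab
  rcases lt_or_gt_of_ne hab with h | h
  · have := main (b - a - 1).toNat a
    rwa [show a + ((b - a - 1).toNat : ℤ) + 1 = b by omega] at this
  · have := main (a - b - 1).toNat b
    rw [show b + ((a - b - 1).toNat : ℤ) + 1 = a by omega] at this
    rwa [show Equiv.swap b a = Equiv.swap a b from Equiv.swap_comm b a] at this

/-- any product of two transpositions -/
lemma auxPair {H : Subgroup (Equiv.Perm ℤ)}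
    (hS : ∀ a b : ℤ, a ≠ b → Equiv.swap a b * Equiv.swap 0 1 ∈ H) :
    ∀ a b c d : ℤ, a ≠ b → c ≠ d → Equiv.swap a b * Equiv.swap c d ∈ H := by
  intro a b c d hab hcd
  have h1 := hS a b hab
  have h2 : Equiv.swap 0 1 * Equiv.swap c d ∈ H := by
    have := H.inv_mem (hS c d hcd)
    rwa [mul_inv_rev, Equiv.swap_inv, Equiv.swap_inv] at this
  have h3 := H.mul_mem h1 h2
  rwa [mul_assoc, ← mul_assoc (Equiv.swap 0 1), Equiv.swap_mul_self, one_mul] at h3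


lemma threeCycle_decomp {β : Type*} [DecidableEq β] [Fintype β] {τ : Equiv.Perm β}
    (h : τ.IsThreeCycle) :
    ∃ a b c : β, a ≠ b ∧ a ≠ c ∧ b ≠ c ∧ τ = Equiv.swap a c * Equiv.swap a b := by
  have hcard := h.card_support
  obtain ⟨a, ha⟩ := Finset.card_pos.mp (by rw [hcard]; norm_num : 0 < τ.support.card)
  have haa : τ a ≠ a := Equiv.Perm.mem_support.mp ha
  have h3 : τ ^ 3 = 1 := by
    have := h.orderOf
    rw [← this]; exact pow_orderOf_eq_one τ
  have h3a : τ (τ (τ a)) = a := by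
    have : (τ ^ 3) a = a := by rw [h3]; rfl
    simpa [pow_succ, Equiv.Perm.mul_apply] using this
  have hab : a ≠ τ a := fun h' => haa h'.symm
  have hac : a ≠ τ (τ a) := by
    intro h'
    have := congrArg τ h'
    rw [h3a] at this
    exact haa this
  have hbc : τ a ≠ τ (τ a) := fun h' => haa (τ.injective h').symm
  have hsub : ({a, τ a, τ (τ a)} : Finset β) ⊆ τ.support := by
    intro z hz
    simp only [Finset.mem_insert, Finset.mem_singleton] at hz
    rcases hz with rfl | rfl | rfl
    · exact ha
    · exact Equiv.Perm.apply_mem_support.mpr ha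
    · exact Equiv.Perm.apply_mem_support.mpr (Equiv.Perm.apply_mem_support.mpr ha)
  have hset : ({a, τ a, τ (τ a)} : Finset β) = τ.support := by
    apply Finset.eq_of_subset_of_card_le hsub
    rw [hcard]
    rw [Finset.card_insert_of_notMem (by simp [hab, hac]),
      Finset.card_insert_of_notMem (by simp [hbc]), Finset.card_singleton]
  refine ⟨a, τ a, τ (τ a), hab, hac, hbc, ?_⟩
  ext z
  by_cases hz : z ∈ ({a, τ a, τ (τ a)} : Finset β)
  · simp only [Finset.mem_insert, Finset.mem_singleton] at hz
    rcases hz with rfl | rfl | rfl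
    · rw [Equiv.Perm.mul_apply, Equiv.swap_apply_left,
        Equiv.swap_apply_of_ne_of_ne haa hbc]
    · rw [Equiv.Perm.mul_apply, Equiv.swap_apply_right, Equiv.swap_apply_left]
    · rw [Equiv.Perm.mul_apply,
        Equiv.swap_apply_of_ne_of_ne (Ne.symm hac) (Ne.symm hbc),
        Equiv.swap_apply_right, h3a]
  · have hzs : z ∉ τ.support := by rw [← hset]; exact hz
    have hτz : τ z = z := Equiv.Perm.notMem_support.mp hzs
    simp only [Finset.mem_insert, Finset.mem_singleton, not_or] at hz
    obtain ⟨h1, h2, h3'⟩ := hz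
    rw [hτz, Equiv.Perm.mul_apply, Equiv.swap_apply_of_ne_of_ne h1 h2,
      Equiv.swap_apply_of_ne_of_ne h1 h3']

lemma viaEmbedding_swap {β : Type*} [DecidableEq β] (f : β ↪ ℤ) (u v : β) :
    (Equiv.swap u v).viaEmbedding f = Equiv.swap (f u) (f v) := by
  ext i
  by_cases hi : i ∈ Set.range f
  · obtain ⟨z, rfl⟩ := hi
    rw [Equiv.Perm.viaEmbedding_apply]
    rcases eq_or_ne z u with rfl | hzu
    · simp
    rcases eq_or_ne z v with rfl | hzv
    · simp
    rw [Equiv.swap_apply_of_ne_of_ne hzu hzv,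
      Equiv.swap_apply_of_ne_of_ne (f.injective.ne hzu) (f.injective.ne hzv)]
  · rw [Equiv.Perm.viaEmbedding_apply_of_notMem _ _ _ hi,
      Equiv.swap_apply_of_ne_of_ne (fun h => hi ⟨u, h.symm⟩) (fun h => hi ⟨v, h.symm⟩)]

lemma auxThree {β : Type*} [DecidableEq β] [Fintype β] {H : Subgroup (Equiv.Perm ℤ)}
    (hPair : ∀ a b c d : ℤ, a ≠ b → c ≠ d → Equiv.swap a b * Equiv.swap c d ∈ H)
    (f : β ↪ ℤ) (τ : Equiv.Perm β) (hτ : τ.IsThreeCycle) :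
    Equiv.Perm.viaEmbeddingHom f τ ∈ H := by
  obtain ⟨a, b, c, hab, hac, hbc, rfl⟩ := threeCycle_decomp hτ
  rw [map_mul, Equiv.Perm.viaEmbeddingHom_apply, Equiv.Perm.viaEmbeddingHom_apply,
    viaEmbedding_swap, viaEmbedding_swap]
  exact hPair _ _ _ _ (fun h => hac (f.injective h)) (fun h => hab (f.injective h))

/-- For `q ≥ 2`, every finite group embeds into the subgroup of `Sym(ℤ)`
generated by the translation `x : i ↦ i + 1` and the `q`-cycle `y = (1 2 … q)`. -/
theorem finite_group_embeds_in_closure_translation_cycle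
    (q : ℕ) (hq : 2 ≤ q)
    (x y : Equiv.Perm ℤ) (hx : x = Equiv.addRight (1 : ℤ))
    (hy₁ : ∀ i : ℤ, 1 ≤ i → i ≤ (q : ℤ) - 1 → y i = i + 1)
    (hy₂ : y (q : ℤ) = 1)
    (hy₃ : ∀ i : ℤ, i < 1 ∨ (q : ℤ) < i → y i = i) :
    ∀ (A : Type*) [Group A] [Finite A],
      ∃ f : A →* Subgroup.closure ({x, y} : Set (Equiv.Perm ℤ)),
        Function.Injective f := by
  intro A _ _
  classical
  set H := Subgroup.closure ({x, y} : Set (Equiv.Perm ℤ)) with hH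
  have hq' : (2:ℤ) ≤ (q:ℤ) := by exact_mod_cast hq
  have hxH : x ∈ H := Subgroup.subset_closure (Set.mem_insert _ _)
  have hyH : y ∈ H := Subgroup.subset_closure (Set.mem_insert_of_mem _ rfl)
  have hxapp : ∀ i : ℤ, x i = i + 1 := by intro i; rw [hx]; rfl
  have hxinv : ∀ i : ℤ, x⁻¹ i = i - 1 := by
    intro i
    have h1 : x (x⁻¹ i) = i := x.apply_symm_apply i
    rw [hxapp] at h1; omega
  have hxz : ∀ k : ℤ, ∀ i : ℤ, (x ^ k) i = i + k := by
    intro k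
    induction k using Int.induction_on with
    | zero => simp
    | succ n ih =>
      intro i
      rw [zpow_add_one, Equiv.Perm.mul_apply, hxapp, ih]
      push_cast; ring
    | pred n ih =>
      intro i
      rw [zpow_sub_one, Equiv.Perm.mul_apply, hxinv, ih]
      push_cast; ring
  -- the key 3-cycle (1, q, q+1) = swap 1 (q+1) * swap 1 q
  have key : ∀ i : ℤ, y ((Equiv.swap 1 ((q:ℤ)+1) * Equiv.swap 1 (q:ℤ)) i) = y (i-1) + 1 := by
    intro i
    rw [Equiv.Perm.mul_apply]
    by_cases c1 : i < 1
    · rw [Equiv.swap_apply_of_ne_of_ne (show i ≠ 1 by omega) (show i ≠ (q:ℤ) by omega),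
        Equiv.swap_apply_of_ne_of_ne (show i ≠ 1 by omega) (show i ≠ (q:ℤ)+1 by omega),
        hy₃ i (Or.inl c1), hy₃ (i-1) (Or.inl (by omega))]
      ring
    by_cases c2 : i = 1
    · subst c2
      rw [Equiv.swap_apply_left,
        Equiv.swap_apply_of_ne_of_ne (show (q:ℤ) ≠ 1 by omega) (show (q:ℤ) ≠ (q:ℤ)+1 by omega),
        hy₂, show (1:ℤ) - 1 = 0 by norm_num, hy₃ 0 (Or.inl (by norm_num))]
      norm_num
    by_cases c3 : i < (q:ℤ)
    · rw [Equiv.swap_apply_of_ne_of_ne (show i ≠ 1 by omega) (show i ≠ (q:ℤ) by omega),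
        Equiv.swap_apply_of_ne_of_ne (show i ≠ 1 by omega) (show i ≠ (q:ℤ)+1 by omega),
        hy₁ i (by omega) (by omega), hy₁ (i-1) (by omega) (by omega)]
      ring
    by_cases c4 : i = (q:ℤ)
    · subst c4
      rw [Equiv.swap_apply_right, Equiv.swap_apply_left,
        hy₃ ((q:ℤ)+1) (Or.inr (by omega)), hy₁ ((q:ℤ)-1) (by omega) (by omega)]
      ring
    by_cases c5 : i = (q:ℤ)+1
    · subst c5
      rw [Equiv.swap_apply_of_ne_of_ne (show (q:ℤ)+1 ≠ 1 by omega)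
          (show (q:ℤ)+1 ≠ (q:ℤ) by omega),
        Equiv.swap_apply_right, hy₁ 1 (by omega) (by omega),
        show (q:ℤ) + 1 - 1 = (q:ℤ) by ring, hy₂]
    · rw [Equiv.swap_apply_of_ne_of_ne (show i ≠ 1 by omega) (show i ≠ (q:ℤ) by omega),
        Equiv.swap_apply_of_ne_of_ne (show i ≠ 1 by omega) (show i ≠ (q:ℤ)+1 by omega),
        hy₃ i (Or.inr (by omega)), hy₃ (i-1) (Or.inr (by omega))]
      ring
  have hw : x * y * x⁻¹ = y * (Equiv.swap 1 ((q:ℤ)+1) * Equiv.swap 1 (q:ℤ)) := by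
    ext i
    simp only [Equiv.Perm.mul_apply]
    rw [← Equiv.Perm.mul_apply (Equiv.swap 1 ((q:ℤ)+1)), key i, hxinv, hxapp]
  have hwH : Equiv.swap 1 ((q:ℤ)+1) * Equiv.swap 1 (q:ℤ) ∈ H := by
    have heq : Equiv.swap 1 ((q:ℤ)+1) * Equiv.swap 1 (q:ℤ) = y⁻¹ * (x * y * x⁻¹) := by
      rw [hw, inv_mul_cancel_left]
    rw [heq]
    exact H.mul_mem (H.inv_mem hyH) (H.mul_mem (H.mul_mem hxH hyH) (H.inv_mem hxH))
  -- translates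
  set d : ℤ := (q:ℤ) - 1 with hdd
  have hd1 : 1 ≤ d := by omega
  have hT : ∀ m : ℤ, Equiv.swap m (m + d + 1) * Equiv.swap m (m + d) ∈ H := by
    intro m
    have hg : x ^ (m - 1) ∈ H := H.zpow_mem hxH _
    have h1 := conj_mem hg hwH
    rw [hxz (m-1) 1, hxz (m-1) ((q:ℤ)+1), hxz (m-1) (q:ℤ)] at h1
    rw [show (1:ℤ) + (m-1) = m by ring, show (q:ℤ) + 1 + (m-1) = m + d + 1 by omega,
      show (q:ℤ) + (m-1) = m + d by omega] at h1
    exact h1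
  have hAdj : ∀ m : ℤ, Equiv.swap m (m + 2) * Equiv.swap m (m + 1) ∈ H := by
    rcases eq_or_lt_of_le hd1 with h1 | h2
    · intro m
      have := hT m
      rw [← h1] at this
      rwa [show m + 1 + 1 = m + 2 by ring] at this
    · exact auxE (d-2).toNat d (by omega) (auxC d (by omega) hT)
  have hPair : ∀ a b c d : ℤ, a ≠ b → c ≠ d → Equiv.swap a b * Equiv.swap c d ∈ H :=
    auxPair (auxS (auxP hAdj))
  -- the embedding of A
  letI : Fintype A := Fintype.ofFinite A
  let φ : A →* Equiv.Perm A := MulAction.toPermHom A A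
  have hφ : Function.Injective φ := MulAction.toPerm_injective
  let δ : Equiv.Perm A →* Equiv.Perm (A ⊕ A) :=
    (Equiv.Perm.sumCongrHom A A).comp ((MonoidHom.id (Equiv.Perm A)).prod (MonoidHom.id _))
  have hδ : Function.Injective δ :=
    (Equiv.Perm.sumCongrHom_injective).comp (fun a b h => congrArg Prod.fst h)
  have hδapp : ∀ σ : Equiv.Perm A, δ σ = Equiv.sumCongr σ σ := fun σ => rfl
  let e := Fintype.equivFin (A ⊕ A)
  let f : (A ⊕ A) ↪ ℤ :=
    ⟨fun z => ((e z : Fin _) : ℕ),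
      fun u v h => e.injective (Fin.val_injective (by simpa using h))⟩
  let ψ : Equiv.Perm (A ⊕ A) →* Equiv.Perm ℤ := Equiv.Perm.viaEmbeddingHom f
  have hψ : Function.Injective ψ := Equiv.Perm.viaEmbeddingHom_injective f
  have hmem : ∀ σ : Equiv.Perm A, ψ (δ σ) ∈ H := by
    intro σ
    have hsign : δ σ ∈ alternatingGroup (A ⊕ A) := by
      rw [Equiv.Perm.mem_alternatingGroup, hδapp, Equiv.Perm.sign_sumCongr]
      exact Int.units_mul_self _
    have hcl : δ σ ∈ Subgroup.closure {τ : Equiv.Perm (A ⊕ A) | τ.IsThreeCycle} := by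
      rw [Equiv.Perm.closure_three_cycles_eq_alternating]
      exact hsign
    have hmap := Subgroup.mem_map_of_mem ψ hcl
    rw [MonoidHom.map_closure] at hmap
    have hle : Subgroup.closure (ψ '' {τ : Equiv.Perm (A ⊕ A) | τ.IsThreeCycle}) ≤ H := by
      rw [Subgroup.closure_le]
      rintro _ ⟨τ, hτ, rfl⟩
      exact auxThree hPair f τ hτ
    exact hle hmap
  let χ : A →* Equiv.Perm ℤ := ψ.comp (δ.comp φ)
  have hχ : Function.Injective χ := hψ.comp (hδ.comp hφ)
  refine ⟨χ.codRestrict H (fun a => hmem (φ a)), ?_⟩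
  intro a b hab
  exact hχ (congrArg Subtype.val hab)
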